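/- Let T be the and-or explanation tree for p w.r.t. Π and X, and define the weight W_T on vertices by: W_T(v) = min over children c of W_T(c) if v is an atom vertex, and W_T(v) = 1 + sum over children c of W_T(c) if v is a rule vertex (leaves, being rule vertices, have weight 1). Then for every explanation tree T' in T (a subtree containing the root where each atom vertex keeps exactly one child and each rule vertex keeps all its children), the number of rule vertices of T' is at least W_T(root), and there exists an explanation tree achieving exactly W_T(root) rule vertices. -/

import Mathlib

/-- A ground normal rule: head atom, positive body atoms, negative body atoms. -/
structure Rule (α : Type) where
  head : α
  pos : Finset α
  neg : Finset α

/-- Finite rose trees with vertex labels in `L`; a vertex of a tree is identified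
with the subtree hanging from it. -/
inductive RTree (L : Type) : Type
  | node : L → List (RTree L) → RTree L

namespace RTree

def label {L : Type} : RTree L → L
  | node l _ => l

def children {L : Type} : RTree L → List (RTree L)
  | node _ cs => cs

end RTree

/-- Rule `r` supports atom `p` using atoms in `X` but not in `Z`:
`H(r) = p`, `B⁺(r) ⊆ X \ Z` and `B⁻(r) ∩ X = ∅`. -/
def Supports {α : Type} (X Z : Set α) (r : Rule α) (p : α) : Prop :=
  r.head = p ∧ ↑r.pos ⊆ X \ Z ∧ ∀ a ∈ r.neg, a ∉ X

/-- `IsAOTNode P X Z t`: `t` is (a node of) the and-or explanation tree w.r.t.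
program `P` and answer set `X`, where `Z` is the set of atoms labeling the
ancestor atom vertices.  An atom vertex labeled `p` has one rule-vertex child for
each rule of `P` supporting `p` using atoms in `X` but not in `insert p Z` (and
only such children), and has at least one child (so that every leaf is a rule
vertex); a rule vertex labeled `r` has one atom-vertex child for each atom of
`B⁺(r)` (and only such children). -/
inductive IsAOTNode {α : Type} (P : Set (Rule α)) (X : Set α) :
    Set α → RTree (α ⊕ Rule α) → Prop
  | atom {Z : Set α} {p : α} {cs : List (RTree (α ⊕ Rule α))}
      (hp : p ∈ X) (hne : cs ≠ [])
      (hcomplete : ∀ r ∈ P, Supports X (insert p Z) r p →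
        ∃ c ∈ cs, RTree.label c = Sum.inr r)
      (hsound : ∀ c ∈ cs,
        ∃ r ∈ P, Supports X (insert p Z) r p ∧ RTree.label c = Sum.inr r)
      (hrec : ∀ c ∈ cs, IsAOTNode P X (insert p Z) c) :
      IsAOTNode P X Z (.node (.inl p) cs)
  | rule {Z : Set α} {r : Rule α} {cs : List (RTree (α ⊕ Rule α))}
      (hcomplete : ∀ a ∈ r.pos, ∃ c ∈ cs, RTree.label c = Sum.inl a)
      (hsound : ∀ c ∈ cs, ∃ a ∈ r.pos, RTree.label c = Sum.inl a)
      (hrec : ∀ c ∈ cs, IsAOTNode P X Z c) :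
      IsAOTNode P X Z (.node (.inr r) cs)

/-- Minimum of a list of naturals (0 for the empty list; only used on nonempty
lists of children weights). -/
def listMin : List ℕ → ℕ
  | [] => 0
  | a :: l => l.foldr min a

/-- The weight function `W_T`: an atom (or-) vertex gets the minimum of its
children's weights, a rule (and-) vertex gets `1` plus the sum of its children's
weights (so leaves, being rule vertices, have weight 1). -/
def weightT {α ρ : Type} : RTree (α ⊕ ρ) → ℕ
  | .node (.inl _) cs => listMin (cs.attach.map (fun c => weightT c.1))
  | .node (.inr _) cs => 1 + (cs.attach.map (fun c => weightT c.1)).sum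
decreasing_by
  all_goals (have := List.sizeOf_lt_of_mem c.2; simp only [RTree.node.sizeOf_spec]; omega)

/-- The number of rule (and-) vertices of a tree. -/
def ruleCount {α ρ : Type} : RTree (α ⊕ ρ) → ℕ
  | .node (.inl _) cs => (cs.attach.map (fun c => ruleCount c.1)).sum
  | .node (.inr _) cs => 1 + (cs.attach.map (fun c => ruleCount c.1)).sum
decreasing_by
  all_goals (have := List.sizeOf_lt_of_mem c.2; simp only [RTree.node.sizeOf_spec]; omega)

/-- `SolOf S T`: `S` is an explanation tree (solution subtree) in the and-or tree
`T`: it has the same root label, each atom (or-) vertex of `S` keeps exactly one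
of the children it has in `T`, and each rule (and-) vertex keeps all of its
children. -/
inductive SolOf {α ρ : Type} : RTree (α ⊕ ρ) → RTree (α ⊕ ρ) → Prop
  | atom {a : α} {cs : List (RTree (α ⊕ ρ))} {c s : RTree (α ⊕ ρ)} :
      c ∈ cs → SolOf s c → SolOf (.node (.inl a) [s]) (.node (.inl a) cs)
  | rule {r : ρ} {cs ss : List (RTree (α ⊕ ρ))} :
      List.Forall₂ SolOf ss cs → SolOf (.node (.inr r) ss) (.node (.inr r) cs)

section Aux

theorem weightT_inl {α ρ : Type} (a : α) (cs : List (RTree (α ⊕ ρ))) :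
    weightT (.node (.inl a) cs) = listMin (cs.map weightT) := by
  rw [weightT]; congr 1; simp

theorem weightT_inr {α ρ : Type} (r : ρ) (cs : List (RTree (α ⊕ ρ))) :
    weightT (.node (.inr r) cs) = 1 + (cs.map weightT).sum := by
  rw [weightT]; congr 2; simp

theorem ruleCount_inl {α ρ : Type} (a : α) (cs : List (RTree (α ⊕ ρ))) :
    ruleCount (.node (.inl a) cs) = (cs.map ruleCount).sum := by
  rw [ruleCount]; congr 1; simp

theorem ruleCount_inr {α ρ : Type} (r : ρ) (cs : List (RTree (α ⊕ ρ))) :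
    ruleCount (.node (.inr r) cs) = 1 + (cs.map ruleCount).sum := by
  rw [ruleCount]; congr 2; simp

theorem foldr_min_le_init : ∀ (l : List ℕ) (b : ℕ), l.foldr min b ≤ b := by
  intro l
  induction l with
  | nil => simp
  | cons c t ih => intro b; exact le_trans (min_le_right _ _) (ih b)

theorem foldr_min_le_mem : ∀ (l : List ℕ) (b x : ℕ), x ∈ l → l.foldr min b ≤ x := by
  intro l
  induction l with
  | nil => simp
  | cons c t ih =>
    intro b x hx
    rcases List.mem_cons.mp hx with rfl | hx
    · exact min_le_left _ _
    · exact le_trans (min_le_right _ _) (ih b x hx)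

theorem listMin_le {x : ℕ} {l : List ℕ} (hx : x ∈ l) : listMin l ≤ x := by
  cases l with
  | nil => simp at hx
  | cons a t =>
    rcases List.mem_cons.mp hx with rfl | hx
    · exact foldr_min_le_init t x
    · exact foldr_min_le_mem t a x hx

theorem foldr_min_mem : ∀ (l : List ℕ) (b : ℕ), l.foldr min b = b ∨ l.foldr min b ∈ l := by
  intro l
  induction l with
  | nil => intro b; exact Or.inl rfl
  | cons c t ih =>
    intro b
    simp only [List.foldr_cons]
    rcases min_choice c (t.foldr min b) with h | h
    · right; rw [h]; exact List.mem_cons_self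
    · rw [h]
      rcases ih b with h' | h'
      · exact Or.inl h'
      · exact Or.inr (List.mem_cons_of_mem _ h')

theorem listMin_mem {l : List ℕ} (h : l ≠ []) : listMin l ∈ l := by
  cases l with
  | nil => simp at h
  | cons a t =>
    show t.foldr min a ∈ _
    rcases foldr_min_mem t a with h' | h'
    · rw [h']; exact List.mem_cons_self
    · exact List.mem_cons_of_mem _ h'

theorem sum_le_of_forall₂ {β γ : Type*} {f : β → ℕ} {g : γ → ℕ}
    {R : β → γ → Prop} :
    ∀ {ss : List β} {cs : List γ}, List.Forall₂ R ss cs →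
      (∀ s c, c ∈ cs → R s c → g c ≤ f s) → (cs.map g).sum ≤ (ss.map f).sum := by
  intro ss cs h
  induction h with
  | nil => simp
  | cons hbc htl ih =>
    intro hR
    simp only [List.map_cons, List.sum_cons]
    exact Nat.add_le_add (hR _ _ (List.mem_cons_self) hbc)
      (ih fun s c hc => hR s c (List.mem_cons_of_mem _ hc))

theorem sum_eq_of_forall₂ {β γ : Type*} {f : β → ℕ} {g : γ → ℕ}
    {R : β → γ → Prop} (hR : ∀ b c, R b c → f b = g c) :
    ∀ {ss : List β} {cs : List γ}, List.Forall₂ R ss cs →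
      (ss.map f).sum = (cs.map g).sum := by
  intro ss cs h
  induction h with
  | nil => simp
  | cons hbc _ ih =>
    simp only [List.map_cons, List.sum_cons]
    rw [hR _ _ hbc, ih]

theorem skolem_forall₂ {β : Type*} {R : β → β → Prop} :
    ∀ (cs : List β), (∀ c ∈ cs, ∃ s, R s c) → ∃ ss, List.Forall₂ R ss cs := by
  intro cs
  induction cs with
  | nil => exact fun _ => ⟨[], List.Forall₂.nil⟩
  | cons c t ih =>
    intro h
    obtain ⟨s, hs⟩ := h c (List.mem_cons_self)
    obtain ⟨ss, hss⟩ := ih (fun x hx => h x (List.mem_cons_of_mem _ hx))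
    exact ⟨s :: ss, List.Forall₂.cons hs hss⟩

theorem sol_lower_bound {α ρ : Type} :
    ∀ (T S : RTree (α ⊕ ρ)), SolOf S T → weightT T ≤ ruleCount S
  | .node (.inl a) cs, S, h => by
    cases h with
    | atom hc hs =>
      rename_i c s
      rw [weightT_inl, ruleCount_inl]
      simp only [List.map_cons, List.map_nil, List.sum_cons, List.sum_nil, Nat.add_zero]
      exact le_trans (listMin_le (List.mem_map_of_mem hc)) (sol_lower_bound c s hs)
  | .node (.inr r) cs, S, h => by
    cases h with
    | rule h2 =>
      rw [weightT_inr, ruleCount_inr]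
      exact Nat.add_le_add_left
        (sum_le_of_forall₂ h2 (fun s c hc hsc => sol_lower_bound c s hsc)) _
termination_by T _ _ => sizeOf T
decreasing_by
  all_goals
    (subst_vars; have := List.sizeOf_lt_of_mem hc; simp only [RTree.node.sizeOf_spec]; omega)

theorem sol_exists {α : Type} {P : Set (Rule α)} {X : Set α} :
    ∀ {Z : Set α} {T : RTree (α ⊕ Rule α)}, IsAOTNode P X Z T →
      ∃ S, SolOf S T ∧ ruleCount S = weightT T := by
  intro Z T h
  induction h with
  | atom hp hne hcomplete hsound hrec ih =>
    rename_i Z' p cs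
    have hne' : cs.map weightT ≠ [] := by simpa using hne
    obtain ⟨c, hc, hcw⟩ := List.mem_map.mp (listMin_mem hne')
    obtain ⟨s, hs, hsw⟩ := ih c hc
    refine ⟨.node (.inl p) [s], SolOf.atom hc hs, ?_⟩
    rw [weightT_inl, ruleCount_inl]
    simp only [List.map_cons, List.map_nil, List.sum_cons, List.sum_nil, Nat.add_zero]
    rw [hsw, hcw]
  | rule hcomplete hsound hrec ih =>
    rename_i Z' r cs
    obtain ⟨ss, hss⟩ := skolem_forall₂ (R := fun s c => SolOf s c ∧ ruleCount s = weightT c)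
      cs (fun c hc => ih c hc)
    refine ⟨.node (.inr r) ss, SolOf.rule (hss.imp fun _ _ hx => hx.1), ?_⟩
    rw [weightT_inr, ruleCount_inr]
    rw [sum_eq_of_forall₂ (fun _ _ hx => hx.2) hss]

end Aux

/-- Every explanation tree in the and-or explanation tree `T` has at least
`W_T(root)` rule vertices, and some explanation tree achieves exactly
`W_T(root)` rule vertices. -/
theorem weight_is_min_ruleCount {α : Type} (P : Set (Rule α)) (X : Set α) (p : α)
    (T : RTree (α ⊕ Rule α)) (hT : IsAOTNode P X ∅ T)
    (hroot : RTree.label T = Sum.inl p) :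
    (∀ S, SolOf S T → weightT T ≤ ruleCount S) ∧
    (∃ S, SolOf S T ∧ ruleCount S = weightT T) := by
  exact ⟨fun S hS => sol_lower_bound _ _ hS, sol_exists hT⟩
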